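/- (Error Propagation Bound) Let D, Y, Z be discrete random variables on finite alphabets, and suppose there exists a random variable Y' with Y' ⊥ Z | D (conditional independence), H(Y'|D) ≤ H(Y|D), and P(Y ≠ Y') ≤ ε ≤ 1/2. Then H(Y|Z) ≤ H(Y|D) + ε·log|𝒴| + H₂(ε) + H(D|Z), where 𝒴 is the common alphabet of Y and Y'. -/

import Mathlib

/-- Conditional Shannon entropy `H(A|B)` computed from a joint pmf `p` on `A × B`
(convention `0 * log 0 = 0`, handled by `Real.log 0 = 0` and `0 / 0 = 0`). -/
noncomputable def condEnt {A B : Type*} [Fintype A] [Fintype B] (p : A → B → ℝ) : ℝ :=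
  -∑ b, ∑ a, p a b * Real.log (p a b / (∑ a', p a' b))
/-- Binary entropy function `H₂`. -/
noncomputable def binEnt (e : ℝ) : ℝ := -(e * Real.log e) - (1 - e) * Real.log (1 - e)

lemma aux_log_mono {a b c : ℝ} (ha : 0 ≤ a) (hab : a ≤ b) (hbc : b ≤ c) :
    a * Real.log (a / c) ≤ a * Real.log (b / c) := by
  rcases ha.eq_or_lt with h | h
  · simp [← h]
  · have hb : 0 < b := lt_of_lt_of_le h hab
    have hc : 0 < c := lt_of_lt_of_le hb hbc
    have h2 : Real.log (a / c) ≤ Real.log (b / c) :=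
      Real.log_le_log (div_pos h hc) (by gcongr)
    exact mul_le_mul_of_nonneg_left h2 ha

lemma aux_log_split {a b c e : ℝ} (ha : 0 ≤ a) (hab : a ≤ b) (hbc : b ≤ c) (hce : c ≤ e) :
    a * Real.log (a / e) = a * Real.log (c / e) + a * Real.log (b / c) + a * Real.log (a / b) := by
  rcases ha.eq_or_lt with h | h
  · simp [← h]
  · have hb : 0 < b := lt_of_lt_of_le h hab
    have hc : 0 < c := lt_of_lt_of_le hb hbc
    have he : 0 < e := lt_of_lt_of_le hc hce
    rw [Real.log_div h.ne' he.ne', Real.log_div hc.ne' he.ne', Real.log_div hb.ne' hc.ne',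
        Real.log_div h.ne' hb.ne']
    ring

lemma aux_gibbs {a m r : ℝ} (ha : 0 ≤ a) (ham : a ≤ m) (hr : 0 ≤ r) (h : 0 < a → 0 < r) :
    a * Real.log r - a * Real.log (a / m) ≤ m * r - a := by
  rcases ha.eq_or_lt with h0 | h0
  · simp only [← h0, zero_mul, sub_zero, sub_self]
    exact mul_nonneg (le_trans ha ham) hr
  · have hm : 0 < m := lt_of_lt_of_le h0 ham
    have hrp := h h0
    have key : Real.log (r * m / a) ≤ r * m / a - 1 := Real.log_le_sub_one_of_pos (by positivity)
    have hlog : Real.log (r * m / a) = Real.log r + Real.log m - Real.log a := by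
      rw [Real.log_div (by positivity) h0.ne', Real.log_mul hrp.ne' hm.ne']
    have hlog2 : Real.log (a / m) = Real.log a - Real.log m := Real.log_div h0.ne' hm.ne'
    calc a * Real.log r - a * Real.log (a / m)
        = a * Real.log (r * m / a) := by rw [hlog2, hlog]; ring
      _ ≤ a * (r * m / a - 1) := mul_le_mul_of_nonneg_left key h0.le
      _ = m * r - a := by field_simp

lemma aux_scalar {A B ε N : ℝ} (hB0 : 0 ≤ B) (hBε : B ≤ ε) (hε : ε ≤ 1/2) (hAB : A = 1 - B)
    (hN : 1 ≤ N) :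
    -(A * Real.log (1 - ε) + B * Real.log (ε / N)) ≤ ε * Real.log N + binEnt ε := by
  have hε0 : 0 ≤ ε := hB0.trans hBε
  rcases hε0.eq_or_lt with h0 | h0
  · have hB : B = 0 := le_antisymm (hBε.trans h0.symm.le) hB0
    rw [hAB, hB, ← h0]; simp [binEnt]
  · have hN0 : 0 < N := lt_of_lt_of_le one_pos hN
    have h1ε : 0 < 1 - ε := by linarith
    rw [Real.log_div h0.ne' hN0.ne']
    have hlogN : 0 ≤ Real.log N := Real.log_nonneg hN
    have hle : Real.log ε ≤ Real.log (1 - ε) := Real.log_le_log h0 (by linarith)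
    have hkey : 0 ≤ (ε - B) * (Real.log N + Real.log (1 - ε) - Real.log ε) :=
      mul_nonneg (by linarith) (by linarith)
    rw [hAB]
    simp only [binEnt]
    nlinarith [hkey]


lemma aux_rot3 {α β γ : Type*} [Fintype α] [Fintype β] [Fintype γ] (f : α → β → γ → ℝ) :
    ∑ a, ∑ b, ∑ c, f a b c = ∑ b, ∑ c, ∑ a, f a b c := by
  rw [Finset.sum_comm]
  exact Finset.sum_congr rfl fun b _ => Finset.sum_comm

lemma aux_perm4 {α β γ δ : Type*} [Fintype α] [Fintype β] [Fintype γ] [Fintype δ]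
    (f : α → β → γ → δ → ℝ) :
    ∑ a, ∑ b, ∑ c, ∑ e, f a b c e = ∑ b, ∑ e, ∑ c, ∑ a, f a b c e := by
  rw [Finset.sum_comm]
  refine Finset.sum_congr rfl fun b _ => ?_
  rw [aux_rot3]
  exact Finset.sum_comm

/-- Error Propagation Bound (Theorem 3): if there is `Y'` with `Y' ⊥ Z | D`,
`H(Y'|D) ≤ H(Y|D)` and `P(Y ≠ Y') ≤ ε ≤ 1/2`, then
`H(Y|Z) ≤ H(Y|D) + ε·log|𝒴| + H₂(ε) + H(D|Z)`.
The joint pmf `q d y y' z` describes `(D, Y, Y', Z)`. -/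
theorem error_propagation_bound
    {𝒟 𝒴 𝒵 : Type*} [Fintype 𝒟] [Fintype 𝒴] [Fintype 𝒵] [DecidableEq 𝒴]
    (q : 𝒟 → 𝒴 → 𝒴 → 𝒵 → ℝ) (hq : ∀ d y y' z, 0 ≤ q d y y' z)
    (hsum : ∑ d, ∑ y, ∑ y', ∑ z, q d y y' z = 1)
    (ε : ℝ) (hε : ε ≤ 1 / 2)
    (hci : ∀ d y' z,
      (∑ y'', ∑ z', ∑ y, q d y y'' z') * (∑ y, q d y y' z) =
        (∑ z', ∑ y, q d y y' z') * (∑ y'', ∑ y, q d y y'' z))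
    (hent : condEnt (fun y' d => ∑ y, ∑ z, q d y y' z) ≤
        condEnt (fun y d => ∑ y', ∑ z, q d y y' z))
    (herr : ∑ d, ∑ y, ∑ y', ∑ z, (if y = y' then 0 else q d y y' z) ≤ ε) :
    condEnt (fun y z => ∑ d, ∑ y', q d y y' z) ≤
      condEnt (fun y d => ∑ y', ∑ z, q d y y' z) +
        ε * Real.log (Fintype.card 𝒴) + binEnt ε +
        condEnt (fun d z => ∑ y, ∑ y', q d y y' z) := by
  classical
  have h𝒴 : Nonempty 𝒴 := by
    by_contra h
    rw [not_nonempty_iff] at h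
    simp [Finset.univ_eq_empty] at hsum
  set N : ℝ := (Fintype.card 𝒴 : ℝ) with hNdef
  have hNpos : (0:ℝ) < N := by
    rw [hNdef]; exact_mod_cast Fintype.card_pos (α := 𝒴)
  have hN1 : (1:ℝ) ≤ N := by
    rw [hNdef]; exact_mod_cast Fintype.card_pos (α := 𝒴)
  -- basic nonnegativity / ε bounds
  have hif0 : ∀ d y y' z, 0 ≤ (if y = y' then 0 else q d y y' z) := by
    intro d y y' z; split_ifs with h; exacts [le_rfl, hq d y y' z]
  have hε0 : 0 ≤ ε := by
    refine le_trans ?_ herr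
    exact Finset.sum_nonneg fun d _ => Finset.sum_nonneg fun y _ =>
      Finset.sum_nonneg fun y' _ => Finset.sum_nonneg fun z _ => hif0 d y y' z
  have hqle : ∀ d y y' z, y ≠ y' → q d y y' z ≤ ε := by
    intro d y y' z hne
    have h1 : q d y y' z = (if y = y' then 0 else q d y y' z) := by simp [hne]
    refine le_trans ?_ herr
    calc q d y y' z = (if y = y' then 0 else q d y y' z) := h1
      _ ≤ ∑ z, (if y = y' then 0 else q d y y' z) :=
          Finset.single_le_sum (fun i _ => hif0 d y y' i) (Finset.mem_univ z)
      _ ≤ ∑ y', ∑ z, (if y = y' then 0 else q d y y' z) :=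
          Finset.single_le_sum (fun i _ => Finset.sum_nonneg fun j _ => hif0 d y i j)
            (Finset.mem_univ y')
      _ ≤ ∑ y, ∑ y', ∑ z, (if y = y' then 0 else q d y y' z) :=
          Finset.single_le_sum
            (fun i _ => Finset.sum_nonneg fun j _ => Finset.sum_nonneg fun k _ => hif0 d i j k)
            (Finset.mem_univ y)
      _ ≤ ∑ d, ∑ y, ∑ y', ∑ z, (if y = y' then 0 else q d y y' z) :=
          Finset.single_le_sum
            (fun i _ => Finset.sum_nonneg fun a _ => Finset.sum_nonneg fun j _ =>
              Finset.sum_nonneg fun k _ => hif0 i a j k)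
            (Finset.mem_univ d)
  -- marginals
  set pZ : 𝒵 → ℝ := fun z => ∑ d, ∑ y, ∑ y', q d y y' z with hpZ
  set pYZ : 𝒴 → 𝒵 → ℝ := fun y z => ∑ d, ∑ y', q d y y' z with hpYZ
  set pDZ : 𝒟 → 𝒵 → ℝ := fun d z => ∑ y, ∑ y', q d y y' z with hpDZ
  set mm : 𝒟 → 𝒴 → 𝒵 → ℝ := fun d y' z => ∑ y, q d y y' z with hmm
  set pDY : 𝒟 → 𝒴 → ℝ := fun d y' => ∑ y, ∑ z, q d y y' z with hpDY
  set pD : 𝒟 → ℝ := fun d => ∑ y', ∑ y, ∑ z, q d y y' z with hpD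
  have hm0 : ∀ d y' z, 0 ≤ mm d y' z := fun d y' z =>
    Finset.sum_nonneg fun y _ => hq d y y' z
  have hq_m : ∀ d y y' z, q d y y' z ≤ mm d y' z := fun d y y' z =>
    Finset.single_le_sum (fun i _ => hq d i y' z) (Finset.mem_univ y)
  have hpDZ_alt : ∀ d z, pDZ d z = ∑ y', mm d y' z := fun d z => Finset.sum_comm
  have hm_pDZ : ∀ d y' z, mm d y' z ≤ pDZ d z := by
    intro d y' z
    rw [hpDZ_alt]
    exact Finset.single_le_sum (fun i _ => hm0 d i z) (Finset.mem_univ y')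
  have hpDZ0 : ∀ d z, 0 ≤ pDZ d z := fun d z =>
    Finset.sum_nonneg fun y _ => Finset.sum_nonneg fun y' _ => hq d y y' z
  have hpDZ_pZ : ∀ d z, pDZ d z ≤ pZ z := fun d z =>
    Finset.single_le_sum (fun i _ => hpDZ0 i z) (Finset.mem_univ d)
  have hchain : ∀ d y y' z, q d y y' z ≤ mm d y' z ∧ mm d y' z ≤ pDZ d z ∧ pDZ d z ≤ pZ z :=
    fun d y y' z => ⟨hq_m d y y' z, hm_pDZ d y' z, hpDZ_pZ d z⟩
  have hpYZ0 : ∀ y z, 0 ≤ pYZ y z := fun y z =>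
    Finset.sum_nonneg fun d _ => Finset.sum_nonneg fun y' _ => hq d y y' z
  have step1 : condEnt pYZ ≤
      -∑ z, ∑ d, ∑ y', ∑ y, q d y y' z * Real.log (q d y y' z / pZ z) := by
    have e1 : condEnt pYZ = -∑ z, ∑ y, pYZ y z * Real.log (pYZ y z / pZ z) := by
      simp only [condEnt]
      congr 1
      refine Finset.sum_congr rfl fun z _ => Finset.sum_congr rfl fun y _ => ?_
      have e0 : ∑ a', pYZ a' z = pZ z := by
        simp only [hpYZ, hpZ]
        exact Finset.sum_comm
      rw [e0]
    rw [e1]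
    apply neg_le_neg
    refine Finset.sum_le_sum fun z _ => ?_
    have e2 : ∑ d, ∑ y', ∑ y, q d y y' z * Real.log (q d y y' z / pZ z)
        = ∑ y, ∑ d, ∑ y', q d y y' z * Real.log (q d y y' z / pZ z) :=
      (aux_rot3 fun y d y' => q d y y' z * Real.log (q d y y' z / pZ z)).symm
    rw [e2]
    refine Finset.sum_le_sum fun y _ => ?_
    have e3 : pYZ y z * Real.log (pYZ y z / pZ z)
        = ∑ d, ∑ y', q d y y' z * Real.log (pYZ y z / pZ z) := by
      simp only [hpYZ, Finset.sum_mul]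
    rw [e3]
    refine Finset.sum_le_sum fun d _ => Finset.sum_le_sum fun y' _ => ?_
    refine aux_log_mono (hq d y y' z) ?_ ?_
    · calc q d y y' z ≤ ∑ y'', q d y y'' z :=
            Finset.single_le_sum (fun i _ => hq d y i z) (Finset.mem_univ y')
        _ ≤ pYZ y z :=
            Finset.single_le_sum (fun i _ => Finset.sum_nonneg fun j _ => hq i y j z)
              (Finset.mem_univ d)
    · have e4 : pZ z = ∑ y', pYZ y' z := by
        simp only [hpZ, hpYZ]
        exact Finset.sum_comm
      rw [e4]
      exact Finset.single_le_sum (fun i _ => hpYZ0 i z) (Finset.mem_univ y)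
  -- split the log
  have hsplit : (∑ z, ∑ d, ∑ y', ∑ y, q d y y' z * Real.log (q d y y' z / pZ z)) =
      (∑ z, ∑ d, ∑ y', ∑ y, q d y y' z * Real.log (pDZ d z / pZ z))
    + (∑ z, ∑ d, ∑ y', ∑ y, q d y y' z * Real.log (mm d y' z / pDZ d z))
    + (∑ z, ∑ d, ∑ y', ∑ y, q d y y' z * Real.log (q d y y' z / mm d y' z)) := by
    simp only [← Finset.sum_add_distrib]
    refine Finset.sum_congr rfl fun z _ => Finset.sum_congr rfl fun d _ =>
      Finset.sum_congr rfl fun y' _ => Finset.sum_congr rfl fun y _ => ?_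
    exact aux_log_split (hq d y y' z) (hq_m d y y' z) (hm_pDZ d y' z) (hpDZ_pZ d z)
  -- S1 = H(D|Z)
  have hS1 : (∑ z, ∑ d, ∑ y', ∑ y, q d y y' z * Real.log (pDZ d z / pZ z)) =
      ∑ z, ∑ d, pDZ d z * Real.log (pDZ d z / pZ z) := by
    refine Finset.sum_congr rfl fun z _ => Finset.sum_congr rfl fun d _ => ?_
    rw [show pDZ d z * Real.log (pDZ d z / pZ z)
        = (∑ y', ∑ y, q d y y' z) * Real.log (pDZ d z / pZ z) by rw [← hpDZ_alt d z]]
    simp only [Finset.sum_mul]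
  have hS1' : -(∑ z, ∑ d, pDZ d z * Real.log (pDZ d z / pZ z)) = condEnt pDZ := by
    simp only [condEnt]; rfl
  -- S2 = H(Y'|D,Z) = H(Y'|D)
  have hpDYalt : ∀ d y', pDY d y' = ∑ z', mm d y' z' := by
    intro d y'
    simp only [hpDY, hmm]
    exact Finset.sum_comm
  have hpDY0 : ∀ d y', 0 ≤ pDY d y' := fun d y' =>
    Finset.sum_nonneg fun y _ => Finset.sum_nonneg fun z _ => hq d y y' z
  have hS2a : (∑ z, ∑ d, ∑ y', ∑ y, q d y y' z * Real.log (mm d y' z / pDZ d z)) =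
      ∑ z, ∑ d, ∑ y', mm d y' z * Real.log (mm d y' z / pDZ d z) := by
    refine Finset.sum_congr rfl fun z _ => Finset.sum_congr rfl fun d _ =>
      Finset.sum_congr rfl fun y' _ => ?_
    rw [show mm d y' z * Real.log (mm d y' z / pDZ d z)
        = (∑ y, q d y y' z) * Real.log (mm d y' z / pDZ d z) from rfl]
    simp only [Finset.sum_mul]
  have hci' : ∀ d y' z, mm d y' z * Real.log (mm d y' z / pDZ d z)
      = mm d y' z * Real.log (pDY d y' / pD d) := by
    intro d y' z
    rcases (hm0 d y' z).eq_or_lt with h0 | h0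
    · simp [← h0]
    · have hpDZpos : 0 < pDZ d z := lt_of_lt_of_le h0 (hm_pDZ d y' z)
      have hpDYpos : 0 < pDY d y' := by
        rw [hpDYalt]
        exact lt_of_lt_of_le h0
          (Finset.single_le_sum (fun i _ => hm0 d y' i) (Finset.mem_univ z))
      have hpDalt : pD d = ∑ y'', pDY d y'' := rfl
      have hpDpos : 0 < pD d := by
        rw [hpDalt]
        exact lt_of_lt_of_le hpDYpos
          (Finset.single_le_sum (fun i _ => hpDY0 d i) (Finset.mem_univ y'))
      have hc := hci d y' z
      have e1 : (∑ y'', ∑ z', ∑ y, q d y y'' z') = pD d := by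
        simp only [hpD]
        exact Finset.sum_congr rfl fun y'' _ => Finset.sum_comm
      have e2 : (∑ z', ∑ y, q d y y' z') = pDY d y' := by
        rw [hpDYalt]
      have e3 : (∑ y'', ∑ y, q d y y'' z) = pDZ d z := by
        simp only [hpDZ]
        exact Finset.sum_comm
      have e4 : (∑ y, q d y y' z) = mm d y' z := rfl
      rw [e1, e2, e3, e4] at hc
      have e5 : mm d y' z / pDZ d z = pDY d y' / pD d := by
        field_simp
        linarith [hc]
      rw [e5]
  have hS2b : (∑ z, ∑ d, ∑ y', mm d y' z * Real.log (mm d y' z / pDZ d z)) =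
      ∑ d, ∑ y', pDY d y' * Real.log (pDY d y' / pD d) := by
    rw [show (∑ z, ∑ d, ∑ y', mm d y' z * Real.log (mm d y' z / pDZ d z)) =
        ∑ z, ∑ d, ∑ y', mm d y' z * Real.log (pDY d y' / pD d) from
      Finset.sum_congr rfl fun z _ => Finset.sum_congr rfl fun d _ =>
        Finset.sum_congr rfl fun y' _ => hci' d y' z]
    rw [aux_rot3 fun z d y' => mm d y' z * Real.log (pDY d y' / pD d)]
    refine Finset.sum_congr rfl fun d _ => Finset.sum_congr rfl fun y' _ => ?_
    rw [hpDYalt d y', Finset.sum_mul]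
  have hS2' : -(∑ d, ∑ y', pDY d y' * Real.log (pDY d y' / pD d)) =
      condEnt (fun y' d => ∑ y, ∑ z, q d y y' z) := by
    simp only [condEnt]; rfl
  -- S3 : Fano-type bound
  set r₀ : 𝒴 → 𝒴 → ℝ := fun y y' => if y = y' then 1 - ε else ε / N with hr₀
  have hr0 : ∀ y y', 0 ≤ r₀ y y' := by
    intro y y'
    simp only [hr₀]
    split_ifs
    · linarith
    · positivity
  have hsum_r : ∀ y', ∑ y, r₀ y y' = 1 - ε / N := by
    intro y'
    have h1 : ∀ y, r₀ y y' = ε / N + (if y = y' then 1 - ε - ε / N else 0) := by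
      intro y
      simp only [hr₀]
      split_ifs <;> ring
    rw [Finset.sum_congr rfl fun y _ => h1 y, Finset.sum_add_distrib, Finset.sum_const,
      Finset.sum_ite_eq' Finset.univ y' (fun _ => 1 - ε - ε / N)]
    have hcard : ((Finset.univ : Finset 𝒴).card : ℝ) = N := by
      rw [hNdef]; rfl
    rw [nsmul_eq_mul, hcard]
    simp only [Finset.mem_univ, if_true]
    field_simp
    ring
  have hcell : ∀ z d y',
      ∑ y, (q d y y' z * Real.log (r₀ y y')
        - q d y y' z * Real.log (q d y y' z / mm d y' z)) ≤ 0 := by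
    intro z d y'
    have h1 : ∀ y, q d y y' z * Real.log (r₀ y y')
        - q d y y' z * Real.log (q d y y' z / mm d y' z)
        ≤ mm d y' z * r₀ y y' - q d y y' z := by
      intro y
      refine aux_gibbs (hq d y y' z) (hq_m d y y' z) (hr0 y y') ?_
      intro hpos
      by_cases hyy : y = y'
      · simp only [hr₀, hyy, if_true]
        linarith
      · simp only [hr₀, hyy, if_false]
        exact div_pos (lt_of_lt_of_le hpos (hqle d y y' z hyy)) hNpos
    calc ∑ y, (q d y y' z * Real.log (r₀ y y')
          - q d y y' z * Real.log (q d y y' z / mm d y' z))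
        ≤ ∑ y, (mm d y' z * r₀ y y' - q d y y' z) := Finset.sum_le_sum fun y _ => h1 y
      _ = mm d y' z * (∑ y, r₀ y y') - mm d y' z := by
          rw [Finset.sum_sub_distrib, ← Finset.mul_sum,
            show (∑ y, q d y y' z) = mm d y' z from rfl]
      _ = mm d y' z * (1 - ε / N) - mm d y' z := by rw [hsum_r]
      _ ≤ 0 := by nlinarith [hm0 d y' z, mul_nonneg (hm0 d y' z) (div_nonneg hε0 hNpos.le)]
  have hS3a : -(∑ z, ∑ d, ∑ y', ∑ y, q d y y' z * Real.log (q d y y' z / mm d y' z))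
      ≤ -(∑ z, ∑ d, ∑ y', ∑ y, q d y y' z * Real.log (r₀ y y')) := by
    apply neg_le_neg
    have h2 : ∑ z, ∑ d, ∑ y', ∑ y, (q d y y' z * Real.log (r₀ y y')
        - q d y y' z * Real.log (q d y y' z / mm d y' z)) ≤ 0 :=
      Finset.sum_nonpos fun z _ => Finset.sum_nonpos fun d _ =>
        Finset.sum_nonpos fun y' _ => hcell z d y'
    simp only [Finset.sum_sub_distrib] at h2
    linarith
  have hval : (∑ z, ∑ d, ∑ y', ∑ y, q d y y' z * Real.log (r₀ y y')) =
      (∑ z, ∑ d, ∑ y', ∑ y, if y = y' then q d y y' z else 0) * Real.log (1 - ε)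
    + (∑ z, ∑ d, ∑ y', ∑ y, if y = y' then 0 else q d y y' z) * Real.log (ε / N) := by
    have h3 : ∀ z d y' y, q d y y' z * Real.log (r₀ y y') =
        (if y = y' then q d y y' z else 0) * Real.log (1 - ε)
      + (if y = y' then 0 else q d y y' z) * Real.log (ε / N) := by
      intro z d y' y
      simp only [hr₀]
      split_ifs <;> simp
    rw [Finset.sum_congr rfl fun z _ => Finset.sum_congr rfl fun d _ =>
      Finset.sum_congr rfl fun y' _ => Finset.sum_congr rfl fun y _ => h3 z d y' y]
    simp only [Finset.sum_add_distrib, ← Finset.sum_mul]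
  have hABsum : (∑ z, ∑ d, ∑ y', ∑ y, if y = y' then q d y y' z else 0)
      + (∑ z, ∑ d, ∑ y', ∑ y, if y = y' then 0 else q d y y' z) = 1 := by
    rw [← hsum]
    simp only [← Finset.sum_add_distrib]
    rw [Finset.sum_congr rfl fun z _ => Finset.sum_congr rfl fun d _ =>
      Finset.sum_congr rfl fun y' _ => Finset.sum_congr rfl fun y _ =>
      show (if y = y' then q d y y' z else 0) + (if y = y' then 0 else q d y y' z)
        = q d y y' z by split_ifs <;> ring]
    exact aux_perm4 fun z d y' y => q d y y' z
  have hB0 : 0 ≤ (∑ z, ∑ d, ∑ y', ∑ y, if y = y' then 0 else q d y y' z) :=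
    Finset.sum_nonneg fun z _ => Finset.sum_nonneg fun d _ =>
      Finset.sum_nonneg fun y' _ => Finset.sum_nonneg fun y _ => hif0 d y y' z
  have hBε : (∑ z, ∑ d, ∑ y', ∑ y, if y = y' then 0 else q d y y' z) ≤ ε := by
    rw [aux_perm4 fun z d y' y => if y = y' then 0 else q d y y' z]
    exact herr
  have hS3 : -(∑ z, ∑ d, ∑ y', ∑ y, q d y y' z * Real.log (q d y y' z / mm d y' z))
      ≤ ε * Real.log N + binEnt ε := by
    refine le_trans hS3a ?_
    rw [hval, neg_add]
    have := aux_scalar (A := ∑ z, ∑ d, ∑ y', ∑ y, if y = y' then q d y y' z else 0)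
      hB0 hBε hε (by linarith [hABsum]) hN1
    linarith [this]
  -- assemble
  have key := step1
  rw [hsplit, neg_add, neg_add] at key
  have k1 : -(∑ z, ∑ d, ∑ y', ∑ y, q d y y' z * Real.log (pDZ d z / pZ z)) = condEnt pDZ := by
    rw [hS1]; exact hS1'
  have k2 : -(∑ z, ∑ d, ∑ y', ∑ y, q d y y' z * Real.log (mm d y' z / pDZ d z))
      ≤ condEnt (fun y d => ∑ y', ∑ z, q d y y' z) := by
    rw [hS2a, hS2b, hS2']
    exact hent
  linarith [key, k1, k2, hS3]
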